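/- Let D ≥ 1, μ ∈ ℝ, σ > 0, and let X₀, X₁, …, X_D be i.i.d. with distribution N(μ, σ²). Then for every real t, P( X₀ < X₁ < ⋯ < X_D and X_D ≤ t ) = Φ((t−μ)/σ)^{D+1} / (D+1)!. In particular P(X₀ < X₁ < ⋯ < X_D) = 1/(D+1)! and the conditional density of X_D given the all-increasing dynamic pattern X₀ < X₁ < ⋯ < X_D is the beta-normal density BN(D+1, 1, μ, σ)(x) = (D+1)·Φ((x−μ)/σ)^D · (1/σ) φ((x−μ)/σ). -/

import Mathlib

open MeasureTheory ProbabilityTheory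
open scoped ENNReal NNReal

/-- The standard normal p.d.f. `φ`. -/
noncomputable def stdPhi (x : ℝ) : ℝ := Real.exp (-(x ^ 2) / 2) / Real.sqrt (2 * Real.pi)

/-- The standard normal c.d.f. `Φ`. -/
noncomputable def stdCDF (x : ℝ) : ℝ := ∫ t in Set.Iic x, stdPhi t

section Aux

open Set

lemma gaussianReal_noAtoms (μ : ℝ) {v : NNReal} (hv : v ≠ 0) :
    NullSingletonClass (gaussianReal μ v) :=
  ⟨fun x => gaussianReal_absolutelyContinuous μ hv (measure_singleton x)⟩

/-- Diagonals are null for products of atomless measures. -/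
lemma pi_diag_null {m : ℕ} (ν : Measure ℝ) [IsProbabilityMeasure ν] [NullSingletonClass ν]
    {i j : Fin (m + 1)} (hij : i ≠ j) :
    (Measure.pi fun _ : Fin (m + 1) => ν) {x | x i = x j} = 0 := by
  obtain ⟨k, hk⟩ := Fin.exists_succAbove_eq hij.symm
  have hmp := measurePreserving_piFinSuccAbove (fun _ : Fin (m + 1) => ν) i
  set T := MeasurableEquiv.piFinSuccAbove (fun _ : Fin (m + 1) => ℝ) i with hT
  have hpre : {x : Fin (m + 1) → ℝ | x i = x j} = T ⁻¹' {p : ℝ × (Fin m → ℝ) | p.1 = p.2 k} := by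
    ext x
    simp only [Set.mem_setOf_eq, Set.mem_preimage]
    have h1 : (T x).1 = x i := rfl
    have h2 : (T x).2 k = x (i.succAbove k) := rfl
    rw [h1, h2, hk]
  have hU : MeasurableSet {p : ℝ × (Fin m → ℝ) | p.1 = p.2 k} :=
    measurableSet_eq_fun measurable_fst ((measurable_pi_apply k).comp measurable_snd)
  rw [hpre, hmp.measure_preimage hU.nullMeasurableSet]
  have hzero : ∀ a : ℝ, (Measure.pi fun _ : Fin m => ν) (Prod.mk a ⁻¹' {p : ℝ × (Fin m → ℝ) | p.1 = p.2 k}) = 0 := by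
    intro a
    have heq : (Prod.mk a ⁻¹' {p : ℝ × (Fin m → ℝ) | p.1 = p.2 k}) = {y : Fin m → ℝ | y k = a} := by
      ext y; simp [eq_comm]
    rw [heq]
    exact Measure.pi_hyperplane (fun _ : Fin m => ν) k a
  rw [Measure.prod_apply hU]
  simp only [hzero]
  exact lintegral_zero

lemma measurableSet_strictMonoSet {n : ℕ} (C : Set ℝ) (hC : MeasurableSet C)
    (e : Equiv.Perm (Fin n)) :
    MeasurableSet {x : Fin n → ℝ | StrictMono (x ∘ e) ∧ ∀ i, x i ∈ C} := by
  have h1 : MeasurableSet {x : Fin n → ℝ | StrictMono (x ∘ e)} := by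
    have heq : {x : Fin n → ℝ | StrictMono (x ∘ e)} =
        ⋂ (a : Fin n) (b : Fin n) (_ : a < b), {x : Fin n → ℝ | x (e a) < x (e b)} := by
      ext x
      simp only [Set.mem_setOf_eq, Set.mem_iInter, StrictMono, Function.comp]
    rw [heq]
    exact MeasurableSet.iInter fun a => MeasurableSet.iInter fun b =>
      MeasurableSet.iInter fun _ =>
        measurableSet_lt (measurable_pi_apply _) (measurable_pi_apply _)
  have h2 : MeasurableSet {x : Fin n → ℝ | ∀ i, x i ∈ C} := by
    have heq : {x : Fin n → ℝ | ∀ i, x i ∈ C} = ⋂ i, (fun x : Fin n → ℝ => x i) ⁻¹' C := by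
      ext x; simp
    rw [heq]
    exact MeasurableSet.iInter fun i => (measurable_pi_apply i) hC
  exact h1.inter h2

lemma measurableSet_strictMonoSet' {n : ℕ} (C : Set ℝ) (hC : MeasurableSet C) :
    MeasurableSet {x : Fin n → ℝ | StrictMono x ∧ ∀ i, x i ∈ C} :=
  (measurableSet_strictMonoSet C hC (1 : Equiv.Perm (Fin n))).congr
    (by ext x; simp [Function.comp_id])

lemma perm_measure_eq {n : ℕ} (ν : Measure ℝ) [IsProbabilityMeasure ν]
    (C : Set ℝ) (hC : MeasurableSet C) (e : Equiv.Perm (Fin n)) :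
    (Measure.pi fun _ : Fin n => ν) {x | StrictMono (x ∘ e) ∧ ∀ i, x i ∈ C}
      = (Measure.pi fun _ : Fin n => ν) {x | StrictMono x ∧ ∀ i, x i ∈ C} := by
  have hmp := measurePreserving_piCongrLeft (fun _ : Fin n => ν) e.symm
  set T := MeasurableEquiv.piCongrLeft (fun _ : Fin n => ℝ) e.symm with hTdef
  have hT : ∀ (x : Fin n → ℝ) (b : Fin n), T x b = x (e b) := by
    intro x b
    have := MeasurableEquiv.piCongrLeft_apply_apply e.symm (β := fun _ => ℝ) x (e b)
    simpa using this
  have hpre : T ⁻¹' {x : Fin n → ℝ | StrictMono x ∧ ∀ i, x i ∈ C}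
      = {x : Fin n → ℝ | StrictMono (x ∘ e) ∧ ∀ i, x i ∈ C} := by
    ext x
    have hTx : T x = x ∘ e := funext (hT x)
    simp only [Set.mem_preimage, Set.mem_setOf_eq, hTx]
    constructor
    · rintro ⟨hsm, hmem⟩
      exact ⟨hsm, fun i => by simpa using hmem (e.symm i)⟩
    · rintro ⟨hsm, hmem⟩
      exact ⟨hsm, fun i => hmem (e i)⟩
  rw [← hpre, hmp.measure_preimage (measurableSet_strictMonoSet' C hC).nullMeasurableSet]

/-- Key combinatorial lemma: the pi measure of the strictly increasing tuples with entries
in a measurable set `C` is `ν(C)^n / n!`. -/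
lemma pi_strictMono_measure {m : ℕ} (ν : Measure ℝ) [IsProbabilityMeasure ν] [NullSingletonClass ν]
    (C : Set ℝ) (hC : MeasurableSet C) :
    (Measure.pi fun _ : Fin (m + 1) => ν) {x | StrictMono x ∧ ∀ i, x i ∈ C}
      = ν C ^ (m + 1) / (Nat.factorial (m + 1) : ℝ≥0∞) := by
  set n := m + 1 with hn
  set π := Measure.pi fun _ : Fin n => ν with hπ
  set S : Equiv.Perm (Fin n) → Set (Fin n → ℝ) :=
    fun e => {x | StrictMono (x ∘ e) ∧ ∀ i, x i ∈ C} with hS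
  have hSmeas : ∀ e, MeasurableSet (S e) := fun e => measurableSet_strictMonoSet C hC e
  have hperm : ∀ e, π (S e) = π {x | StrictMono x ∧ ∀ i, x i ∈ C} :=
    fun e => perm_measure_eq ν C hC e
  have hdisj : Pairwise (Function.onFun Disjoint S) := by
    intro e e' hee'
    rw [Function.onFun, Set.disjoint_left]
    rintro x ⟨h1, hm1⟩ ⟨h2, _⟩
    have heq : x ∘ e = x ∘ e' := Tuple.unique_monotone h1.monotone h2.monotone
    have hxinj : Function.Injective x := by
      have hinj : Function.Injective (x ∘ ⇑e) := h1.injective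
      intro a b hab
      have h3 : (x ∘ ⇑e) (e.symm a) = (x ∘ ⇑e) (e.symm b) := by simpa using hab
      simpa using congrArg e (hinj h3)
    apply hee'
    ext i
    exact congrArg Fin.val (hxinj (congrFun heq i))
  have hB : π {x : Fin n → ℝ | ¬ Function.Injective x} = 0 := by
    have hsub : {x : Fin n → ℝ | ¬ Function.Injective x}
        ⊆ ⋃ (i : Fin n) (j : Fin n) (_ : i ≠ j), {x : Fin n → ℝ | x i = x j} := by
      intro x hx
      simp only [Set.mem_setOf_eq, Function.Injective, not_forall] at hx
      obtain ⟨a, b, hab, hne⟩ := hx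
      exact Set.mem_iUnion.2 ⟨a, Set.mem_iUnion.2 ⟨b, Set.mem_iUnion.2 ⟨hne, hab⟩⟩⟩
    refine measure_mono_null hsub ?_
    refine measure_iUnion_null fun i => measure_iUnion_null fun j => measure_iUnion_null fun h => ?_
    exact pi_diag_null ν h
  have hA : π {x : Fin n → ℝ | ∀ i, x i ∈ C} = ν C ^ n := by
    have heq : {x : Fin n → ℝ | ∀ i, x i ∈ C} = Set.pi Set.univ (fun _ => C) := by
      ext x; simp [Set.mem_pi]
    rw [heq, Measure.pi_pi]
    simp [Finset.prod_const, Finset.card_univ]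
  have hsub : (⋃ e, S e) ⊆ {x : Fin n → ℝ | ∀ i, x i ∈ C} :=
    Set.iUnion_subset fun e x hx => hx.2
  have hcov : {x : Fin n → ℝ | ∀ i, x i ∈ C}
      ⊆ (⋃ e, S e) ∪ {x : Fin n → ℝ | ¬ Function.Injective x} := by
    intro x hx
    by_cases hinj : Function.Injective x
    · left
      refine Set.mem_iUnion.2 ⟨Tuple.sort x, ?_, hx⟩
      exact (Tuple.monotone_sort x).strictMono_of_injective
        (hinj.comp (Tuple.sort x).injective)
    · exact Or.inr hinj
  have hAU : π {x : Fin n → ℝ | ∀ i, x i ∈ C} = π (⋃ e, S e) := by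
    refine le_antisymm ?_ (measure_mono hsub)
    calc π {x : Fin n → ℝ | ∀ i, x i ∈ C}
        ≤ π ((⋃ e, S e) ∪ {x : Fin n → ℝ | ¬ Function.Injective x}) := measure_mono hcov
      _ ≤ π (⋃ e, S e) + π {x : Fin n → ℝ | ¬ Function.Injective x} := measure_union_le _ _
      _ = π (⋃ e, S e) := by rw [hB, add_zero]
  have hsum : π (⋃ e, S e)
      = (Nat.factorial n : ℝ≥0∞) * π {x : Fin n → ℝ | StrictMono x ∧ ∀ i, x i ∈ C} := by
    rw [measure_iUnion hdisj hSmeas, tsum_fintype]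
    simp only [hperm]
    rw [Finset.sum_const, Finset.card_univ, Fintype.card_perm, Fintype.card_fin, nsmul_eq_mul]
  have hkey : ν C ^ n
      = (Nat.factorial n : ℝ≥0∞) * π {x : Fin n → ℝ | StrictMono x ∧ ∀ i, x i ∈ C} := by
    rw [← hsum, ← hAU, hA]
  rw [ENNReal.eq_div_iff (by exact_mod_cast Nat.factorial_ne_zero n) (ENNReal.natCast_ne_top _)]
  exact hkey.symm

/-- The joint law of independent random variables is the product of the laws. -/
lemma map_tuple_eq_pi {Ω : Type*} [MeasurableSpace Ω] (P : Measure Ω) [IsProbabilityMeasure P]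
    {n : ℕ} (X : Fin n → Ω → ℝ) (hmeas : ∀ i, Measurable (X i))
    (hindep : iIndepFun X P)
    (ν : Measure ℝ) [IsProbabilityMeasure ν] (hdist : ∀ i, Measure.map (X i) P = ν) :
    Measure.map (fun ω i => X i ω) P = Measure.pi fun _ : Fin n => ν := by
  refine (Measure.pi_eq fun s hs => ?_).symm
  rw [Measure.map_apply (measurable_pi_lambda _ hmeas) (MeasurableSet.univ_pi hs)]
  have hpre : (fun ω i => X i ω) ⁻¹' Set.pi Set.univ s = ⋂ i ∈ Finset.univ, X i ⁻¹' s i := by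
    ext ω; simp [Set.mem_pi]
  rw [hpre, hindep.measure_inter_preimage_eq_mul Finset.univ (fun i _ => hs i)]
  exact Finset.prod_congr rfl fun i _ => by
    rw [← hdist i, Measure.map_apply (hmeas i) (hs i)]

/-- The gaussian c.d.f. in terms of `stdCDF`. -/
lemma gaussian_Iic_toReal (μ σ : ℝ) (hσ : 0 < σ) (t : ℝ) :
    ((gaussianReal μ ⟨σ ^ 2, sq_nonneg σ⟩) (Set.Iic t)).toReal = stdCDF ((t - μ) / σ) := by
  have h1 : (1 : NNReal) ≠ 0 := one_ne_zero
  have hmm : gaussianReal μ ⟨σ ^ 2, sq_nonneg σ⟩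
      = (gaussianReal 0 1).map (fun x => σ * x + μ) := by
    have hcomp : (fun x : ℝ => σ * x + μ) = (· + μ) ∘ (σ * ·) := rfl
    rw [hcomp, ← Measure.map_map (measurable_add_const μ) (measurable_const_mul σ),
      gaussianReal_map_const_mul, gaussianReal_map_add_const]
    norm_num
    rfl
  rw [hmm, Measure.map_apply (by fun_prop) measurableSet_Iic]
  have hpre : (fun x : ℝ => σ * x + μ) ⁻¹' Set.Iic t = Set.Iic ((t - μ) / σ) := by
    ext x
    simp only [Set.mem_preimage, Set.mem_Iic]
    rw [le_div_iff₀ hσ]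
    constructor <;> intro h <;> nlinarith
  rw [hpre, gaussianReal_apply_eq_integral 0 h1, ENNReal.toReal_ofReal]
  · have hfun : ∀ x : ℝ, gaussianPDFReal 0 1 x = stdPhi x := by
      intro x
      simp only [gaussianPDFReal, stdPhi, NNReal.coe_one, mul_one, sub_zero]
      rw [inv_mul_eq_div]
    unfold stdCDF
    exact setIntegral_congr_fun measurableSet_Iic fun x _ => hfun x
  · exact setIntegral_nonneg measurableSet_Iic fun x _ => gaussianPDFReal_nonneg 0 1 x

end Aux

/-- for i.i.d. Gaussian samples `X₀, …, X_D`,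
`P(X₀ < X₁ < ⋯ < X_D, X_D ≤ t) = Φ((t-μ)/σ)^{D+1}/(D+1)!` for every real `t`;
in particular `P(X₀ < ⋯ < X_D) = 1/(D+1)!`, so the conditional density of `X_D`
given the all-increasing pattern is `BN(D+1, 1, μ, σ)(x) = (D+1)Φ((x-μ)/σ)^D (1/σ)φ((x-μ)/σ)`. -/
theorem all_increasing_pattern
    {Ω : Type*} [MeasurableSpace Ω] (P : Measure Ω) [IsProbabilityMeasure P]
    (D : ℕ) (hD : 1 ≤ D) (μ σ : ℝ) (hσ : 0 < σ)
    (X : Fin (D + 1) → Ω → ℝ) (hmeas : ∀ i, Measurable (X i))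
    (hindep : iIndepFun X P)
    (hdist : ∀ i, Measure.map (X i) P = gaussianReal μ ⟨σ ^ 2, sq_nonneg σ⟩) :
    (∀ t : ℝ,
      (P ((⋂ j : Fin D, {ω | X j.castSucc ω < X j.succ ω}) ∩
          {ω | X (Fin.last D) ω ≤ t})).toReal
        = stdCDF ((t - μ) / σ) ^ (D + 1) / (Nat.factorial (D + 1) : ℝ)) ∧
    (P (⋂ j : Fin D, {ω | X j.castSucc ω < X j.succ ω})).toReal
        = 1 / (Nat.factorial (D + 1) : ℝ) := by
  set ν : Measure ℝ := gaussianReal μ ⟨σ ^ 2, sq_nonneg σ⟩ with hν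
  have hvne : (⟨σ ^ 2, sq_nonneg σ⟩ : NNReal) ≠ 0 := by
    refine fun h => absurd (congrArg NNReal.toReal h) ?_
    show ¬ (σ ^ 2 = (0:ℝ))
    exact (pow_pos hσ 2).ne'
  haveI : NullSingletonClass ν := gaussianReal_noAtoms μ hvne
  haveI : IsProbabilityMeasure ν := instIsProbabilityMeasureGaussianReal μ _
  set Y : Ω → Fin (D + 1) → ℝ := fun ω i => X i ω with hY
  have hYmeas : Measurable Y := measurable_pi_lambda _ hmeas
  have hmap : Measure.map Y P = Measure.pi fun _ : Fin (D + 1) => ν :=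
    map_tuple_eq_pi P X hmeas hindep ν hdist
  constructor
  · intro t
    have hset : (⋂ j : Fin D, {ω | X j.castSucc ω < X j.succ ω}) ∩
        {ω | X (Fin.last D) ω ≤ t}
        = Y ⁻¹' {x : Fin (D + 1) → ℝ | StrictMono x ∧ ∀ i, x i ∈ Set.Iic t} := by
      ext ω
      simp only [Set.mem_inter_iff, Set.mem_iInter, Set.mem_setOf_eq, Set.mem_preimage,
        Set.mem_Iic, hY]
      constructor
      · rintro ⟨h1, h2⟩
        have hsm : StrictMono fun i => X i ω := Fin.strictMono_iff_lt_succ.mpr h1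
        exact ⟨hsm, fun i => le_trans (hsm.monotone (Fin.le_last i)) h2⟩
      · rintro ⟨hsm, hall⟩
        exact ⟨fun j => hsm (Fin.castSucc_lt_succ (i := j)), hall _⟩
    rw [hset, ← Measure.map_apply hYmeas
      (measurableSet_strictMonoSet' (Set.Iic t) measurableSet_Iic),
      hmap, pi_strictMono_measure ν (Set.Iic t) measurableSet_Iic]
    rw [ENNReal.toReal_div, ENNReal.toReal_pow, ENNReal.toReal_natCast]
    rw [gaussian_Iic_toReal μ σ hσ t]
  · have hset : (⋂ j : Fin D, {ω | X j.castSucc ω < X j.succ ω})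
        = Y ⁻¹' {x : Fin (D + 1) → ℝ | StrictMono x ∧ ∀ i, x i ∈ Set.univ} := by
      ext ω
      simp only [Set.mem_iInter, Set.mem_setOf_eq, Set.mem_preimage, Set.mem_univ, and_true,
        forall_const, hY]
      exact ⟨fun h1 => Fin.strictMono_iff_lt_succ.mpr h1,
        fun hsm j => hsm (Fin.castSucc_lt_succ (i := j))⟩
    rw [hset, ← Measure.map_apply hYmeas
      (measurableSet_strictMonoSet' Set.univ MeasurableSet.univ),
      hmap, pi_strictMono_measure ν Set.univ MeasurableSet.univ]
    simp [ENNReal.toReal_div, ENNReal.toReal_natCast]
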